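/- Let q be a prime power and let n ≠ q² be an integer such that (n−1) divides (q²−1). Write n = n₀q+q₁ with 1 ≤ n₀ ≤ q−1 and 0 ≤ q₁ ≤ q−1, and let k = k₀q+q₀ with 1 ≤ k₀ < ⌊(q₁+n₀q−q₀)/q⌋, 0 ≤ q₀ ≤ q−1, and q₁−q₀ ≤ 1. Then there exists an [n, k+1, n−k]_{q²} MDS linear code C with dim Hull_H(C) ≥ ℓ, where ℓ is the quantity defined from (q,n₀,q₁,k₀,q₀) by the four-case formula. -/

import Mathlib

noncomputable section

/-- The Hermitian dual of a linear code over a field with `q^2` elements. -/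
def hdual {F : Type*} [Field F] (q : ℕ) {n : ℕ} (C : Submodule F (Fin n → F)) :
    Submodule F (Fin n → F) where
  carrier := {x | ∀ c ∈ C, ∑ i, x i * c i ^ q = 0}
  add_mem' := by
    intro x y hx hy c hc
    have hx' := hx c hc
    have hy' := hy c hc
    have : ∑ i, (x + y) i * c i ^ q = (∑ i, x i * c i ^ q) + ∑ i, y i * c i ^ q := by
      rw [← Finset.sum_add_distrib]
      exact Finset.sum_congr rfl fun i _ => by simp [add_mul]
    simp only [Set.mem_setOf_eq] at *
    rw [this, hx', hy', add_zero]
  zero_mem' := by intro c hc; simp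
  smul_mem' := by
    intro s x hx c hc
    have hx' := hx c hc
    have : ∑ i, (s • x) i * c i ^ q = s * ∑ i, x i * c i ^ q := by
      rw [Finset.mul_sum]
      exact Finset.sum_congr rfl fun i _ => by simp [mul_assoc]
    simp only [Set.mem_setOf_eq] at *
    rw [this, hx', mul_zero]
/-- The Hamming weight of a word. -/
def wt {F : Type*} [Field F] {n : ℕ} (c : Fin n → F) : ℕ := Set.ncard {i | c i ≠ 0}
/-- The four-case formula for the designed Hermitian hull dimension. -/
def ellF (q n₀ q₁ k₀ q₀ : ℕ) : ℤ :=
  if (k₀ : ℤ) ≤ (q₁ : ℤ) + q - q₀ - 2 then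
    if (q₀ : ℤ) ≤ (n₀ : ℤ) - k₀ - 2 then (k₀ : ℤ) * ((n₀ : ℤ) - k₀) + q₀ + 1
    else ((k₀ : ℤ) + 1) * ((n₀ : ℤ) - k₀)
  else
    if (q₀ : ℤ) < (n₀ : ℤ) - k₀ - 2 then (k₀ : ℤ) * ((n₀ : ℤ) - k₀ - 1) + q₁ + q
    else ((n₀ : ℤ) - k₀ - 1) * ((k₀ : ℤ) + 1) + ((q₁ : ℤ) + q - q₀ - 1)

section Helpers

open Finset

lemma geom_zero' {F : Type*} [Field F] {w : F} {m : ℕ} (hw : w ≠ 1) (h1 : w ^ m = 1) :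
    ∑ i ∈ Finset.range m, w ^ i = 0 := by
  have h := geom_sum_mul w m
  rw [h1, sub_self] at h
  rcases mul_eq_zero.mp h with h | h
  · exact h
  · exact absurd (sub_eq_zero.mp h) hw

lemma fin_filter_card {n : ℕ} (P : ℕ → Prop) [DecidablePred P] :
    ((Finset.univ : Finset (Fin n)).filter fun i => P i.val).card
      = ((Finset.range n).filter P).card := by
  rw [← Finset.card_image_of_injective _ Fin.val_injective]
  congr 1
  ext x
  simp only [Finset.mem_image, Finset.mem_filter, Finset.mem_univ, true_and,
    Finset.mem_range]
  constructor
  · rintro ⟨i, hi, rfl⟩; exact ⟨i.isLt, hi⟩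
  · rintro ⟨hx, hP⟩; exact ⟨⟨x, hx⟩, hP, rfl⟩

theorem arith_facts
    {q n k n₀ q₁ k₀ q₀ : ℕ} (hq2 : 2 ≤ q)
    (hdvd : (n - 1) ∣ (q ^ 2 - 1))
    (hn : n = n₀ * q + q₁) (hn₀l : 1 ≤ n₀) (hn₀u : n₀ ≤ q - 1) (hq₁ : q₁ ≤ q - 1)
    (hk : k = k₀ * q + q₀) (hk₀l : 1 ≤ k₀) (hk₀u : k₀ < (q₁ + n₀ * q - q₀) / q)
    (hq₀ : q₀ ≤ q - 1) (hq₁q₀ : (q₁ : ℤ) - (q₀ : ℤ) ≤ 1) :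
    n₀ + 1 ≤ q₁ ∧ k₀ + 1 ≤ n₀ ∧ k₀ + q₀ + 2 ≤ q₁ + q ∧ n₀ ≤ q₀ ∧ k + 1 ≤ n₀ * q := by
  have hq0 : 0 < q := by omega
  have hn₀q : 1 * q ≤ n₀ * q := Nat.mul_le_mul_right q hn₀l
  -- turn hk₀u into a multiplicative inequality
  have hk' : (k₀ + 1) * q + q₀ ≤ n₀ * q + q₁ := by
    have h2 : (k₀ + 1) * q ≤ q₁ + n₀ * q - q₀ := (Nat.le_div_iff_mul_le hq0).mp hk₀u
    omega
  -- structural fact from divisibility : n₀ + 1 ≤ q₁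
  have hstruct : n₀ + 1 ≤ q₁ := by
    have hn1 : 1 ≤ n := by omega
    have hq21 : 1 ≤ q ^ 2 := Nat.one_le_pow _ _ (by omega)
    have hdZ : ((n : ℤ) - 1) ∣ ((q : ℤ) ^ 2 - 1) := by
      have := Int.natCast_dvd_natCast.mpr hdvd
      push_cast [Nat.cast_sub hn1, Nat.cast_sub hq21] at this
      exact_mod_cast this
    have hnZ : (n : ℤ) = (n₀ : ℤ) * q + q₁ := by exact_mod_cast congrArg (Nat.cast : ℕ → ℤ) hn
    have hTd : ((n : ℤ) - 1) ∣ ((n₀ : ℤ) + ((q₁ : ℤ) - 1) * q) := by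
      have hid : ((n₀ : ℤ) + ((q₁ : ℤ) - 1) * q)
          = (q : ℤ) * ((n : ℤ) - 1) - n₀ * ((q : ℤ) ^ 2 - 1) := by
        rw [hnZ]; ring
      rw [hid]
      exact dvd_sub (dvd_mul_left _ _) (hdZ.mul_left _)
    by_cases hq₁0 : q₁ = 0
    · -- then n₀ = 1 and k₀ = 0, contradiction
      exfalso
      subst hq₁0
      have hT : ((n : ℤ) - 1) ∣ ((q : ℤ) - n₀) := by
        have h := hTd.neg_right
        have hid : -((n₀ : ℤ) + (((0:ℕ) : ℤ) - 1) * q) = (q : ℤ) - n₀ := by push_cast; ring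
        rwa [hid] at h
      have hn₀qZ : (n₀ : ℤ) ≤ (q : ℤ) - 1 := by
        have : n₀ ≤ q - 1 := hn₀u
        omega
      have hTpos : 0 < (q : ℤ) - n₀ := by omega
      have hle := Int.le_of_dvd hTpos hT
      -- n₀ * q - 1 ≤ q - n₀  →  n₀ = 1
      have hn₀1 : n₀ = 1 := by
        by_contra hne
        have h2 : (2 : ℤ) ≤ n₀ := by
          have : 2 ≤ n₀ := by omega
          exact_mod_cast this
        have : (2 : ℤ) * q ≤ (n₀ : ℤ) * q := by
          apply mul_le_mul_of_nonneg_right h2 (by positivity)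
        have hqZ : (2 : ℤ) ≤ q := by exact_mod_cast hq2
        simp only [hnZ] at hle
        push_cast at hle
        linarith
      subst hn₀1
      -- hk' : (k₀+1)*q + q₀ ≤ 1*q + 0
      have h4 : (k₀ + 1) * q ≤ 1 * q := by linarith [hk']
      have := Nat.le_of_mul_le_mul_right h4 hq0
      omega
    · have hq₁pos : 1 ≤ q₁ := Nat.one_le_iff_ne_zero.mpr hq₁0
      have hq₁Z : (1 : ℤ) ≤ q₁ := by exact_mod_cast hq₁pos
      have hTpos : 0 < (n₀ : ℤ) + ((q₁ : ℤ) - 1) * q := by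
        have h1 : (0 : ℤ) ≤ ((q₁ : ℤ) - 1) := by omega
        have h2 : (0 : ℤ) ≤ (q : ℤ) := by positivity
        have := mul_nonneg h1 h2
        have : (0:ℤ) < n₀ := by exact_mod_cast hn₀l
        omega
      have hle := Int.le_of_dvd hTpos hTd
      rw [hnZ] at hle
      -- n₀ q + q₁ - 1 ≤ n₀ + (q₁ - 1) q  →  n₀ ≤ q₁ - 1
      by_contra hcon
      have hge : (q₁ : ℤ) ≤ (n₀ : ℤ) := by
        have : q₁ ≤ n₀ := by omega
        exact_mod_cast this
      have hmul : (q₁ : ℤ) * q ≤ (n₀ : ℤ) * q :=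
        mul_le_mul_of_nonneg_right hge (by positivity)
      have hqZ : (2 : ℤ) ≤ q := by exact_mod_cast hq2
      have hexp : ((q₁ : ℤ) - 1) * q = (q₁ : ℤ) * q - q := by ring
      rw [hexp] at hle
      have hn₀Z : (1 : ℤ) ≤ n₀ := by exact_mod_cast hn₀l
      have hn₀uZ : (n₀ : ℤ) ≤ (q : ℤ) - 1 := by
        have : n₀ ≤ q - 1 := hn₀u
        omega
      linarith
  have hk₀n₀ : k₀ + 1 ≤ n₀ := by
    have hq₁q : q₁ ≤ q - 1 := hq₁
    have h1 : (k₀ + 1) * q < (n₀ + 1) * q := by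
      have he : (n₀ + 1) * q = n₀ * q + q := by ring
      rw [he]
      have : q₁ < q := by omega
      linarith [hk']
    have := Nat.lt_of_mul_lt_mul_right h1
    omega
  have hq₀n₀ : n₀ ≤ q₀ := by omega
  refine ⟨hstruct, hk₀n₀, by omega, hq₀n₀, ?_⟩
  subst hk
  have h2 : (k₀ + 1) * q ≤ n₀ * q := Nat.mul_le_mul_right q hk₀n₀
  have he : (k₀ + 1) * q = k₀ * q + q := by ring
  omega

lemma charP_of_card {F : Type*} [Field F] [Fintype F] {p ee q : ℕ}
    (hp : p.Prime) (hee : 0 < ee) (hpe : p ^ ee = q) (hF : Fintype.card F = q ^ 2) :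
    CharP F p := by
  have hrc : CharP F (ringChar F) := ringChar.charP F
  obtain ⟨nn, hpr, hcard⟩ := FiniteField.card F (ringChar F)
  have hcard' : p ^ (2 * ee) = (ringChar F) ^ (nn : ℕ) := by
    rw [← hcard, hF, ← hpe, ← pow_mul, mul_comm ee 2]
  have hdvd : p ∣ (ringChar F) ^ (nn : ℕ) := by
    rw [← hcard']
    exact dvd_pow_self p (by omega)
  have := hp.dvd_of_dvd_pow hdvd
  have hpeq : p = ringChar F := ((Nat.prime_dvd_prime_iff_eq hp hpr).mp this)
  rwa [hpeq]

lemma ffield_exists_orderOf_eq_of_dvd {F : Type*} [Field F] [Fintype F] {q m : ℕ}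
    (hF : Fintype.card F = q ^ 2) (hq2 : 2 ≤ q) (hm : m ∣ q ^ 2 - 1) (hm0 : 0 < m) :
    ∃ ζ : F, ζ ≠ 0 ∧ orderOf ζ = m := by
  classical
  obtain ⟨g, hg⟩ := IsCyclic.exists_generator (α := Fˣ)
  have hcardu : Fintype.card Fˣ = q ^ 2 - 1 := by
    rw [Fintype.card_units, hF]
  have hgord : orderOf g = q ^ 2 - 1 := by
    rw [orderOf_eq_card_of_forall_mem_zpowers hg, Nat.card_eq_fintype_card, hcardu]
  have hne : q ^ 2 - 1 ≠ 0 := by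
    have : 4 ≤ q ^ 2 := by nlinarith
    omega
  set t := (q ^ 2 - 1) / m with ht
  have htd : t ∣ q ^ 2 - 1 := Nat.div_dvd_of_dvd hm
  refine ⟨((g ^ t : Fˣ) : F), Units.ne_zero _, ?_⟩
  rw [orderOf_units, orderOf_pow, hgord, Nat.gcd_eq_right htd, Nat.div_div_self hm hne]

lemma hermNorm_exists {F : Type*} [Field F] [Fintype F] {q : ℕ}
    (hF : Fintype.card F = q ^ 2) (hq2 : 2 ≤ q) {c : F} (hc : c ≠ 0) (hcq : c ^ q = c) :
    ∃ v : F, v ≠ 0 ∧ v ^ (q + 1) = c := by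
  classical
  obtain ⟨g, hg⟩ := IsCyclic.exists_generator (α := Fˣ)
  have hcardu : Fintype.card Fˣ = q ^ 2 - 1 := by
    rw [Fintype.card_units, hF]
  have hgord : orderOf g = q ^ 2 - 1 := by
    rw [orderOf_eq_card_of_forall_mem_zpowers hg, Nat.card_eq_fintype_card, hcardu]
  set cu : Fˣ := Units.mk0 c hc with hcu
  obtain ⟨t, ht⟩ : ∃ t : ℕ, g ^ t = cu := by
    have := mem_powers_iff_mem_zpowers.mpr (hg cu)
    obtain ⟨t, ht⟩ := this
    exact ⟨t, ht⟩
  -- cu ^ (q - 1) = 1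
  have hcu1 : cu ^ (q - 1) = 1 := by
    have hcq1 : c ^ (q - 1) * c = c := by
      have : c ^ (q - 1) * c = c ^ (q - 1 + 1) := (pow_succ c (q - 1)).symm
      rw [this, Nat.sub_add_cancel (by omega : 1 ≤ q), hcq]
    have hcc : c ^ (q - 1) = 1 :=
      mul_right_cancel₀ hc (by rw [hcq1, one_mul])
    ext
    push_cast [hcu]
    exact hcc
  have hdvd : q ^ 2 - 1 ∣ t * (q - 1) := by
    rw [← hgord]
    exact orderOf_dvd_of_pow_eq_one (by rw [pow_mul, ht, hcu1])
  obtain ⟨r, hr⟩ := Nat.exists_eq_add_of_le hq2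
  have h1 : q - 1 = r + 1 := by omega
  set X := (r + 1) * (r + 3) with hX
  have h2 : q ^ 2 = X + 1 := by rw [hr, hX]; ring
  have h3 : q ^ 2 - 1 = X := by omega
  have h4 : (q - 1) * (q + 1) = X := by rw [h1, hr, hX]; ring
  rw [h3, ← h4] at hdvd
  obtain ⟨s, hs⟩ := hdvd
  have hts : t = (q + 1) * s := by
    have h5 : t * (q - 1) = ((q + 1) * s) * (q - 1) := by rw [hs]; ring
    exact Nat.eq_of_mul_eq_mul_right (show 0 < q - 1 by omega) h5
  refine ⟨((g ^ s : Fˣ) : F), Units.ne_zero _, ?_⟩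
  have : (g ^ s) ^ (q + 1) = cu := by
    rw [← pow_mul, mul_comm s (q+1), ← hts, ht]
  calc ((g ^ s : Fˣ) : F) ^ (q + 1) = (((g ^ s) ^ (q + 1) : Fˣ) : F) := by push_cast; ring
    _ = ((cu : Fˣ) : F) := by rw [this]
    _ = c := rfl

end Helpers

theorem exists_mds_code_hermitianHull_dim_ge_of_sub_one_dvd
    {q n k n₀ q₁ k₀ q₀ : ℕ} (hq : IsPrimePow q)
    (hnq : n ≠ q ^ 2) (hdvd : (n - 1) ∣ (q ^ 2 - 1))
    (hn : n = n₀ * q + q₁) (hn₀l : 1 ≤ n₀) (hn₀u : n₀ ≤ q - 1) (hq₁ : q₁ ≤ q - 1)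
    (hk : k = k₀ * q + q₀) (hk₀l : 1 ≤ k₀) (hk₀u : k₀ < (q₁ + n₀ * q - q₀) / q)
    (hq₀ : q₀ ≤ q - 1) (hq₁q₀ : (q₁ : ℤ) - (q₀ : ℤ) ≤ 1)
    {F : Type*} [Field F] [Fintype F] (hF : Fintype.card F = q ^ 2) :
    ∃ C : Submodule F (Fin n → F),
      Module.finrank F ↥C = k + 1
      ∧ (∀ c ∈ C, c ≠ 0 → n - k ≤ wt c)
      ∧ (∃ c ∈ C, c ≠ 0 ∧ wt c = n - k)
      ∧ ellF q n₀ q₁ k₀ q₀ ≤ (Module.finrank F ↥(C ⊓ hdual q C) : ℤ) := by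
  classical
  have hq2 : 2 ≤ q := hq.two_le
  obtain ⟨hstruct, hk₀n₀, hA, hq₀n₀, hkq⟩ :=
    arith_facts hq2 hdvd hn hn₀l hn₀u hq₁ hk hk₀l hk₀u hq₀ hq₁q₀
  have hq0 : 0 < q := by omega
  have hkn : k + 2 ≤ n := by
    have : n₀ + 1 ≤ q₁ := hstruct
    linarith [hkq, hn.ge]
  obtain ⟨m, rfl⟩ : ∃ m, n = m + 1 := ⟨n - 1, by omega⟩
  have hm : m ∣ q ^ 2 - 1 := by simpa using hdvd
  have hkm : k + 1 ≤ m := by linarith [hkq, hn.le, hn.ge]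
  have hm0 : 0 < m := by omega
  -- characteristic
  obtain ⟨p, ee, hpP, hee, hpe⟩ := hq
  have hp : p.Prime := hpP.nat_prime
  haveI hcharF : CharP F p := charP_of_card hp hee hpe hF
  haveI := Fact.mk hp
  haveI : ExpChar F p := ExpChar.prime hp
  set ψ : F →+* F := iterateFrobenius F p ee with hψdef
  have hψ : ∀ x : F, ψ x = x ^ q := fun x => by
    rw [hψdef, iterateFrobenius_def, hpe]
  -- a primitive m-th root ζ
  obtain ⟨ζ, hζ0, hζord⟩ := ffield_exists_orderOf_eq_of_dvd hF hq2 hm hm0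
  have hζm : ζ ^ m = 1 := by rw [← hζord]; exact pow_orderOf_eq_one ζ
  -- the multiplier v₀ at the point 0
  have hpq : p ∣ q := hpe ▸ dvd_pow_self p (by omega)
  have hp_not_dvd : ¬ p ∣ m := by
    intro hcon
    have h1 : p ∣ q ^ 2 - 1 := hcon.trans hm
    have h2 : p ∣ q ^ 2 := hpq.trans (dvd_pow_self q two_ne_zero)
    have h3 : p ∣ q ^ 2 - (q ^ 2 - 1) := Nat.dvd_sub h2 h1
    have h4 : 1 ≤ q ^ 2 := Nat.one_le_pow _ _ (by omega)
    have h5 : q ^ 2 - (q ^ 2 - 1) = 1 := by omega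
    rw [h5] at h3
    exact hp.one_lt.ne' (Nat.dvd_one.mp h3)
  have hmF : ((m : ℕ) : F) ≠ 0 := by
    rw [Ne, CharP.cast_eq_zero_iff F p]
    exact hp_not_dvd
  set c₀ : F := -((m : ℕ) : F) with hc₀def
  have hc₀ne : c₀ ≠ 0 := neg_ne_zero.mpr hmF
  have hc₀q : c₀ ^ q = c₀ := by
    rw [← hψ, hc₀def, map_neg, map_natCast]
  obtain ⟨v₀, hv₀ne, hv₀⟩ := hermNorm_exists hF hq2 hc₀ne hc₀q
  -- evaluation points and multipliers
  set a : Fin (m + 1) → F := fun i => if (i : ℕ) = 0 then 0 else ζ ^ ((i : ℕ) - 1)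
    with hadef
  set v : Fin (m + 1) → F := fun i => if (i : ℕ) = 0 then v₀ else 1 with hvdef
  have hvne : ∀ i, v i ≠ 0 := by
    intro i
    by_cases h : (i : ℕ) = 0 <;> simp only [hvdef, h] <;> simp [hv₀ne]
  have ha0 : a 0 = 0 := by simp [hadef]
  have hv0 : v 0 = v₀ := by simp [hvdef]
  have hasucc : ∀ i : Fin m, a i.succ = ζ ^ (i : ℕ) := by
    intro i; simp [hadef, Fin.val_succ]
  have hvsucc : ∀ i : Fin m, v i.succ = 1 := by
    intro i; simp [hvdef, Fin.val_succ]
  have hpow_inj : ∀ s t : ℕ, s < m → t < m → ζ ^ s = ζ ^ t → s = t := by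
    intro s t hs ht hst
    exact pow_injOn_Iio_orderOf (by rwa [hζord]) (by rwa [hζord]) hst
  have hainj : Function.Injective a := by
    intro i j hij
    by_cases hi : (i : ℕ) = 0 <;> by_cases hj : (j : ℕ) = 0
    · exact Fin.ext (by omega)
    · exfalso
      rw [hadef] at hij
      simp only [hi, hj, if_true, if_false, if_neg hj] at hij
      exact (pow_ne_zero _ hζ0) hij.symm
    · exfalso
      rw [hadef] at hij
      simp only [hi, hj, if_neg hi] at hij
      exact (pow_ne_zero _ hζ0) hij
    · rw [hadef] at hij
      simp only [if_neg hi, if_neg hj] at hij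
      have h1 : (i : ℕ) - 1 < m := by omega
      have h2 : (j : ℕ) - 1 < m := by omega
      have := hpow_inj _ _ h1 h2 hij
      exact Fin.ext (by omega)
  -- the evaluation linear map
  set φ : (Fin (k + 1) → F) →ₗ[F] (Fin (m + 1) → F) :=
    { toFun := fun u i => v i * ∑ j : Fin (k + 1), u j * a i ^ (j : ℕ)
      map_add' := by
        intro u u'
        funext i
        simp only [Pi.add_apply, add_mul, Finset.sum_add_distrib, mul_add]
      map_smul' := by
        intro s u
        funext i
        simp only [Pi.smul_apply, smul_eq_mul, RingHom.id_apply]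
        rw [Finset.mul_sum, Finset.mul_sum, Finset.mul_sum]
        exact Finset.sum_congr rfl fun j _ => by ring } with hφdef
  have hφ_apply : ∀ u i, φ u i = v i * ∑ j : Fin (k + 1), u j * a i ^ (j : ℕ) :=
    fun _ _ => rfl
  -- polynomial bridge
  set Pu : (Fin (k + 1) → F) → Polynomial F :=
    fun u => ∑ j : Fin (k + 1), Polynomial.C (u j) * Polynomial.X ^ (j : ℕ) with hPudef
  have hPu_eval : ∀ u x, (Pu u).eval x = ∑ j : Fin (k + 1), u j * x ^ (j : ℕ) := by
    intro u x
    rw [hPudef]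
    simp [Polynomial.eval_finset_sum]
  have hPu_deg : ∀ u, (Pu u).natDegree < k + 1 := by
    intro u
    apply Nat.lt_succ_of_le
    refine (Polynomial.natDegree_sum_le _ _).trans ?_
    rw [Finset.fold_max_le]
    refine ⟨Nat.zero_le _, fun j _ => ?_⟩
    refine (Polynomial.natDegree_C_mul_le _ _).trans ?_
    rw [Polynomial.natDegree_X_pow]
    omega
  have hPu_coeff : ∀ u (j : Fin (k + 1)), (Pu u).coeff (j : ℕ) = u j := by
    intro u j
    rw [hPudef]
    simp only
    rw [Polynomial.finset_sum_coeff, Finset.sum_eq_single j]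
    · simp [Polynomial.coeff_C_mul, Polynomial.coeff_X_pow]
    · intro b _ hb
      have hbj : (j : ℕ) ≠ (b : ℕ) := fun h => hb (Fin.ext h.symm)
      simp [Polynomial.coeff_C_mul, Polynomial.coeff_X_pow, hbj]
    · simp
  have hPu_zero : ∀ u, Pu u = 0 → u = 0 := by
    intro u hu
    funext j
    have := hPu_coeff u j
    rw [hu] at this
    simpa using this.symm
  have hφP : ∀ u i, φ u i = v i * (Pu u).eval (a i) := by
    intro u i
    rw [hφ_apply, hPu_eval]
  -- injectivity of φ
  have hφinjz : ∀ u, φ u = 0 → u = 0 := by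
    intro u hu
    apply hPu_zero
    by_contra hPne
    have hroot : ∀ i, a i ∈ (Pu u).roots.toFinset := by
      intro i
      rw [Multiset.mem_toFinset, Polynomial.mem_roots hPne]
      have := congrFun hu i
      rw [hφP] at this
      simp only [Pi.zero_apply] at this
      rcases mul_eq_zero.mp this with h | h
      · exact absurd h (hvne i)
      · exact h
    have hcard : m + 1 ≤ (Pu u).roots.toFinset.card := by
      have h1 : (Finset.univ.image a).card = m + 1 := by
        rw [Finset.card_image_of_injective _ hainj, Finset.card_univ, Fintype.card_fin]
      rw [← h1]
      apply Finset.card_le_card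
      intro x hx
      obtain ⟨i, _, rfl⟩ := Finset.mem_image.mp hx
      exact hroot i
    have hcard2 : (Pu u).roots.toFinset.card ≤ k :=
      (Multiset.toFinset_card_le _).trans
        ((Polynomial.card_roots' _).trans (by have := hPu_deg u; omega))
    omega
  have hφinj : Function.Injective φ := by
    intro x y hxy
    have := hφinjz (x - y) (by rw [map_sub, hxy, sub_self])
    exact sub_eq_zero.mp this
  have hwt : ∀ c : Fin (m + 1) → F,
      wt c = (Finset.univ.filter fun i => ¬ (c i = 0)).card := by
    intro c
    have hset : {i | c i ≠ 0}.toFinset = Finset.univ.filter fun i => ¬ (c i = 0) := by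
      ext i; simp
    rw [wt, Set.ncard_eq_toFinset_card', hset]
  have hdegbound : ∀ u : Fin (k + 1) → F, (Pu u).roots.toFinset.card ≤ k := by
    intro u
    exact (Multiset.toFinset_card_le _).trans
      ((Polynomial.card_roots' _).trans (by have := hPu_deg u; omega))
  refine ⟨LinearMap.range φ, ?_, ?_, ?_, ?_⟩
  · -- dimension
    rw [LinearMap.finrank_range_of_inj hφinj, Module.finrank_fintype_fun_eq_card,
      Fintype.card_fin]
  · -- minimum distance lower bound
    intro c hc hcne
    obtain ⟨u, rfl⟩ := hc
    have hu : u ≠ 0 := fun h => hcne (by rw [h, map_zero])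
    have hPne : Pu u ≠ 0 := fun h => hu (hPu_zero u h)
    have hZ : (Finset.univ.filter fun i => φ u i = 0).card ≤ k := by
      refine (Finset.card_le_card_of_injOn (t := (Pu u).roots.toFinset) a ?_
        (hainj.injOn)).trans (hdegbound u)
      intro i hi
      rw [Finset.mem_coe] at hi
      rw [Finset.mem_coe, Multiset.mem_toFinset, Polynomial.mem_roots hPne]
      have h2 := (Finset.mem_filter.mp hi).2
      rw [hφP] at h2
      rcases mul_eq_zero.mp h2 with h | h
      · exact absurd h (hvne i)
      · exact h
    have hsum := Finset.card_filter_add_card_filter_not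
      (s := Finset.univ) (p := fun i : Fin (m + 1) => φ u i = 0)
    rw [Finset.card_univ, Fintype.card_fin] at hsum
    rw [hwt]
    omega
  · -- codeword of weight exactly n - k
    set P : Polynomial F := ∏ t ∈ Finset.range k, (Polynomial.X - Polynomial.C (ζ ^ t))
      with hPdef
    have hPdeg : P.natDegree < k + 1 := by
      apply Nat.lt_succ_of_le
      refine (Polynomial.natDegree_prod_le _ _).trans ?_
      have hb : ∀ t ∈ Finset.range k,
          (Polynomial.X - Polynomial.C (ζ ^ t)).natDegree ≤ 1 :=
        fun t _ => le_of_eq (Polynomial.natDegree_X_sub_C _)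
      refine (Finset.sum_le_sum hb).trans ?_
      simp
    set u : Fin (k + 1) → F := fun j => P.coeff (j : ℕ) with hudef
    have heval : ∀ x, (∑ j : Fin (k + 1), u j * x ^ (j : ℕ)) = P.eval x := by
      intro x
      rw [Polynomial.eval_eq_sum_range' hPdeg x]
      exact Fin.sum_univ_eq_sum_range (fun t => P.coeff t * x ^ t) (k + 1)
    have happ : ∀ i, φ u i = v i * P.eval (a i) := by
      intro i; rw [hφ_apply, heval]
    have hP0 : P.eval 0 ≠ 0 := by
      rw [hPdef, Polynomial.eval_prod, Finset.prod_ne_zero_iff]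
      intro t _
      simp only [Polynomial.eval_sub, Polynomial.eval_X, Polynomial.eval_C, zero_sub]
      exact neg_ne_zero.mpr (pow_ne_zero _ hζ0)
    have hzero : ∀ i : Fin (m + 1), φ u i = 0 ↔ (1 ≤ (i : ℕ) ∧ (i : ℕ) ≤ k) := by
      intro i
      rw [happ]
      by_cases hi : (i : ℕ) = 0
      · have hai : a i = 0 := by rw [hadef]; simp [hi]
        rw [hai]
        constructor
        · intro h
          rcases mul_eq_zero.mp h with h | h
          · exact absurd h (hvne i)
          · exact absurd h hP0
        · intro h; omega
      · have hai : a i = ζ ^ ((i : ℕ) - 1) := by rw [hadef]; simp [hi]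
        have hvi : v i = 1 := by rw [hvdef]; simp [hi]
        rw [hai, hvi, one_mul, hPdef, Polynomial.eval_prod, Finset.prod_eq_zero_iff]
        constructor
        · rintro ⟨t, ht, hev⟩
          rw [Finset.mem_range] at ht
          simp only [Polynomial.eval_sub, Polynomial.eval_X, Polynomial.eval_C] at hev
          have := hpow_inj _ _ (by omega) (by omega) (sub_eq_zero.mp hev)
          omega
        · rintro ⟨h1, h2⟩
          refine ⟨(i : ℕ) - 1, Finset.mem_range.mpr (by omega), ?_⟩
          simp
    have hcardZ : (Finset.univ.filter fun i : Fin (m + 1) => φ u i = 0).card = k := by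
      have h1 : (Finset.univ.filter fun i : Fin (m + 1) => φ u i = 0)
          = Finset.univ.filter fun i : Fin (m + 1) => (1 ≤ (i : ℕ) ∧ (i : ℕ) ≤ k) := by
        ext i
        simp only [Finset.mem_filter, Finset.mem_univ, true_and]
        exact hzero i
      rw [h1, fin_filter_card (fun x => 1 ≤ x ∧ x ≤ k)]
      have h2 : ((Finset.range (m + 1)).filter fun x => 1 ≤ x ∧ x ≤ k)
          = Finset.Icc 1 k := by
        ext x
        simp only [Finset.mem_filter, Finset.mem_range, Finset.mem_Icc]
        omega
      rw [h2, Nat.card_Icc]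
      omega
    refine ⟨φ u, LinearMap.mem_range_self φ u, ?_, ?_⟩
    · intro h
      have h0 : φ u 0 = 0 := by rw [h]; rfl
      rw [hzero 0] at h0
      simp at h0
    · have hsum := Finset.card_filter_add_card_filter_not
        (s := Finset.univ) (p := fun i : Fin (m + 1) => φ u i = 0)
      rw [Finset.card_univ, Fintype.card_fin, hcardZ] at hsum
      rw [hwt]
      omega
  · -- hull dimension
    set mm : Fin (k₀ + 1) × Fin (n₀ - k₀) → Fin (k + 1) := fun ce =>
      ⟨ce.1.1 * q + ce.2.1, by
        have h1 : ce.1.1 * q ≤ k₀ * q := Nat.mul_le_mul_right q (Nat.lt_succ_iff.mp ce.1.2)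
        have h2 : ce.2.1 + k₀ + 1 ≤ n₀ := by have := ce.2.2; omega
        have h3 : ce.2.1 < q₀ := by omega
        rw [hk]
        linarith [h1, h3]⟩ with hmmdef
    have hmm_val : ∀ ce, ((mm ce : Fin (k + 1)) : ℕ) = ce.1.1 * q + ce.2.1 := fun ce => rfl
    have hmm_inj : Function.Injective mm := by
      intro x y hxy
      have h : x.1.1 * q + x.2.1 = y.1.1 * q + y.2.1 := by
        have := congrArg (Fin.val) hxy
        simpa [hmm_val] using this
      have hx2 : x.2.1 < q := by have := x.2.2; omega
      have hy2 : y.2.1 < q := by have := y.2.2; omega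
      have e1 : ∀ (cv ev : ℕ), ev < q → (cv * q + ev) / q = cv := by
        intro cv ev hev
        rw [mul_comm, Nat.mul_add_div hq0, Nat.div_eq_of_lt hev, add_zero]
      have h1 : x.1.1 = y.1.1 := by
        rw [← e1 x.1.1 x.2.1 hx2, ← e1 y.1.1 y.2.1 hy2, h]
      have h2 : x.2.1 = y.2.1 := by
        rw [h1] at h
        exact Nat.add_left_cancel h
      exact Prod.ext (Fin.ext h1) (Fin.ext h2)
    set w : Fin (k₀ + 1) × Fin (n₀ - k₀) → (Fin (m + 1) → F) :=
      fun ce => φ (Pi.single (mm ce) 1) with hwdef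
    have hlin : LinearIndependent F w := by
      have hb := (Pi.basisFun F (Fin (k + 1))).linearIndependent
      have hcomp := hb.comp mm hmm_inj
      have hmap := hcomp.map' φ (LinearMap.ker_eq_bot.mpr hφinj)
      convert hmap using 1
      funext ce
      simp [hwdef, Function.comp, Pi.basisFun_apply]
      all_goals rfl
    -- the key character sum
    have hkey : ∀ (cc eee jj : ℕ), cc ≤ k₀ → eee + k₀ + 1 ≤ n₀ → jj ≤ k →
        ∑ i : Fin (m + 1), v i ^ (q + 1) * a i ^ (cc * q + eee + q * jj) = 0 := by
      intro cc eee jj hcc heee hjj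
      set M := cc * q + eee + q * jj with hM
      rw [Fin.sum_univ_succ]
      have htail : ∀ i : Fin m, v i.succ ^ (q + 1) * a i.succ ^ M = (ζ ^ M) ^ (i : ℕ) := by
        intro i
        rw [hvsucc, hasucc, one_pow, one_mul, ← pow_mul, mul_comm, pow_mul]
      rw [Finset.sum_congr rfl fun i _ => htail i,
        Fin.sum_univ_eq_sum_range (fun t => (ζ ^ M) ^ t) m]
      by_cases hM0 : M = 0
      · rw [hM0]
        simp only [pow_zero, one_pow, mul_one]
        rw [hv0, hv₀, Finset.sum_const, Finset.card_range, nsmul_eq_mul, mul_one, hc₀def]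
        ring
      · rw [hv0, ha0, zero_pow hM0, mul_zero, zero_add]
        have hw1 : ζ ^ M ≠ 1 := by
          intro hww
          have hdM : m ∣ M := by rw [← hζord]; exact orderOf_dvd_of_pow_eq_one hww
          have hdqZ : (m : ℤ) ∣ (q : ℤ) ^ 2 - 1 := by
            have hh := Int.natCast_dvd_natCast.mpr hm
            have h4 : 1 ≤ q ^ 2 := Nat.one_le_pow _ _ (by omega)
            push_cast [Nat.cast_sub h4] at hh
            exact_mod_cast hh
          have hdMZ : (m : ℤ) ∣ (M : ℤ) := Int.natCast_dvd_natCast.mpr hdM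
          have hdS : (m : ℤ) ∣ ((cc : ℤ) + eee * q + jj) := by
            have hid : ((cc : ℤ) + eee * q + jj)
                = q * (M : ℤ) - ((cc : ℤ) + jj) * ((q : ℤ) ^ 2 - 1) := by
              rw [hM]; push_cast; ring
            rw [hid]
            exact dvd_sub (hdMZ.mul_left q) (hdqZ.mul_left _)
          have hposN : 0 < cc + eee * q + jj := by
            rcases Nat.eq_zero_or_pos (cc + eee * q + jj) with h | h
            · exfalso
              have h1 := Nat.add_eq_zero.mp h
              have h2 := Nat.add_eq_zero.mp h1.1
              rcases Nat.mul_eq_zero.mp h2.2 with h3 | h3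
              · exact hM0 (by rw [hM, h2.1, h3, h1.2]; ring)
              · omega
            · exact h
          have hposZ : (0 : ℤ) < ((cc : ℤ) + eee * q + jj) := by exact_mod_cast hposN
          have hle := Int.le_of_dvd hposZ hdS
          have hleN : m ≤ cc + eee * q + jj := by exact_mod_cast hle
          have hboundN : cc + eee * q + jj + 2 ≤ m + 1 := by
            have h1 : (eee + (k₀ + 1)) * q ≤ n₀ * q := Nat.mul_le_mul_right q (by omega)
            have h2 : (eee + (k₀ + 1)) * q = eee * q + k₀ * q + q := by ring
            rw [h2] at h1
            have h3 : jj ≤ k₀ * q + q₀ := by rw [← hk]; exact hjj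
            linarith [hn.le, hn.ge]
          linarith
        have hwm : (ζ ^ M) ^ m = 1 := by
          rw [← pow_mul, mul_comm, pow_mul, hζm, one_pow]
        exact geom_zero' hw1 hwm
    have hsingle_app : ∀ (J : Fin (k + 1)) i,
        φ (Pi.single J 1) i = v i * a i ^ (J : ℕ) := by
      intro J i
      rw [hφ_apply]
      congr 1
      rw [Finset.sum_eq_single J]
      · simp
      · intro b _ hb; simp [Pi.single_eq_of_ne hb]
      · simp
    have hw_mem : ∀ ce, w ce ∈ LinearMap.range φ ⊓ hdual q (LinearMap.range φ) := by
      intro ce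
      rw [Submodule.mem_inf]
      refine ⟨⟨Pi.single (mm ce) 1, rfl⟩, ?_⟩
      show ∀ c ∈ LinearMap.range φ, ∑ i, w ce i * c i ^ q = 0
      intro c hc
      obtain ⟨u, rfl⟩ := hc
      have hexp : ∀ i, (φ u i) ^ q
          = v i ^ q * ∑ j : Fin (k + 1), (u j) ^ q * a i ^ (q * (j : ℕ)) := by
        intro i
        rw [← hψ, hφ_apply, map_mul, map_sum, hψ]
        congr 1
        refine Finset.sum_congr rfl fun j _ => ?_
        rw [map_mul, map_pow, hψ, hψ, ← pow_mul]
      calc ∑ i, w ce i * (φ u) i ^ q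
          = ∑ i, ∑ j : Fin (k + 1),
              (u j) ^ q * (v i ^ (q + 1) * a i ^ ((ce.1.1 * q + ce.2.1) + q * (j : ℕ))) := by
            refine Finset.sum_congr rfl fun i _ => ?_
            simp only [hwdef]
            rw [hsingle_app]
            simp only [hmm_val]
            rw [hexp, Finset.mul_sum, Finset.mul_sum]
            refine Finset.sum_congr rfl fun j _ => ?_
            rw [pow_add]
            ring
        _ = ∑ j : Fin (k + 1), (u j) ^ q *
              ∑ i, v i ^ (q + 1) * a i ^ ((ce.1.1 * q + ce.2.1) + q * (j : ℕ)) := by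
            rw [Finset.sum_comm]
            exact Finset.sum_congr rfl fun j _ => by rw [Finset.mul_sum]
        _ = 0 := by
            refine Finset.sum_eq_zero fun j _ => ?_
            have hk2 := hkey ce.1.1 ce.2.1 (j : ℕ) (Nat.lt_succ_iff.mp ce.1.2)
              (by have := ce.2.2; omega) (Nat.lt_succ_iff.mp j.2)
            rw [hk2, mul_zero]
    have hspan_le : Submodule.span F (Set.range w)
        ≤ LinearMap.range φ ⊓ hdual q (LinearMap.range φ) :=
      Submodule.span_le.mpr (by rintro x ⟨ce, rfl⟩; exact hw_mem ce)
    have hfr : Module.finrank F ↥(Submodule.span F (Set.range w))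
        = (k₀ + 1) * (n₀ - k₀) := by
      rw [finrank_span_eq_card hlin, Fintype.card_prod, Fintype.card_fin, Fintype.card_fin]
    have hmono := Submodule.finrank_mono hspan_le
    rw [hfr] at hmono
    have hellF : ellF q n₀ q₁ k₀ q₀ = (((k₀ + 1) * (n₀ - k₀) : ℕ) : ℤ) := by
      unfold ellF
      rw [if_pos, if_neg]
      · have hcast : ((n₀ - k₀ : ℕ) : ℤ) = (n₀ : ℤ) - k₀ := by omega
        push_cast [hcast]
        ring
      · push_cast
        omega
      · push_cast
        omega
    rw [hellF]
    exact_mod_cast hmono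


end
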